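/- Let k ≥ 2 be an integer. For every polynomial vector field w = (w₁, w₂) with components of total degree at most k−2 there exists a symmetric polynomial matrix τ whose entries have total degree at most k−1 such that rot τ = w. -/

import Mathlib

open MvPolynomial Matrix

/-- Real polynomials in two variables. -/
abbrev P2 := MvPolynomial (Fin 2) ℝ

/-- The matrix `curl v` of a polynomial vector field, defined row-wise:
`(curl v)_{i1} = ∂₂ vᵢ`, `(curl v)_{i2} = -∂₁ vᵢ`. -/
noncomputable def pcurl (v : Fin 2 → P2) : Matrix (Fin 2) (Fin 2) P2 :=
  Matrix.of fun i j =>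
    if j = 0 then pderiv (1 : Fin 2) (v i) else -(pderiv (0 : Fin 2) (v i))

/-- `sym curl v := (curl v + (curl v)ᵀ)/2`. -/
noncomputable def psymCurl (v : Fin 2 → P2) : Matrix (Fin 2) (Fin 2) P2 :=
  (1 / 2 : ℝ) • (pcurl v + (pcurl v)ᵀ)

/-- `div div τ := Σ_{i,j} ∂ᵢ∂ⱼ τ_{ij}`. -/
noncomputable def pdivDiv (τ : Matrix (Fin 2) (Fin 2) P2) : P2 :=
  ∑ i : Fin 2, ∑ j : Fin 2, pderiv i (pderiv j (τ i j))

/-- The matrix `x xᵀ q` with `(i,j)`-entry `Xᵢ · Xⱼ · q`. -/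
noncomputable def xxT (q : P2) : Matrix (Fin 2) (Fin 2) P2 :=
  Matrix.of fun i j => X i * X j * q

/-- The polynomial vector `x^⊥ = (X₂, -X₁)`. -/
noncomputable def xPerp : Fin 2 → P2 := ![X 1, -X 0]

/-- `rot τ`, with components `(rot τ)ᵢ = ∂₁ τ_{i2} - ∂₂ τ_{i1}`. -/
noncomputable def prot (τ : Matrix (Fin 2) (Fin 2) P2) : Fin 2 → P2 :=
  fun i => pderiv (0 : Fin 2) (τ i 1) - pderiv (1 : Fin 2) (τ i 0)

/-- The Hessian matrix `∇²q` with entries `∂ᵢ∂ⱼ q`. -/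
noncomputable def phess (q : P2) : Matrix (Fin 2) (Fin 2) P2 :=
  Matrix.of fun i j => pderiv i (pderiv j q)

/-- `sym(x^⊥ ⊗ v)`, the symmetric matrix with `(i,j)`-entry
`((x^⊥)ᵢ vⱼ + vᵢ (x^⊥)ⱼ)/2`. -/
noncomputable def symTen (v : Fin 2 → P2) : Matrix (Fin 2) (Fin 2) P2 :=
  Matrix.of fun i j => (1 / 2 : ℝ) • (xPerp i * v j + v i * xPerp j)

/-- The gradient matrix `∇v` with entries `(∇v)_{ij} = ∂ⱼ vᵢ`. -/
noncomputable def pgrad (v : Fin 2 → P2) : Matrix (Fin 2) (Fin 2) P2 :=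
  Matrix.of fun i j => pderiv j (v i)

/-- The symmetric gradient `def v := (∇v + (∇v)ᵀ)/2`. -/
noncomputable def pdef (v : Fin 2 → P2) : Matrix (Fin 2) (Fin 2) P2 :=
  (1 / 2 : ℝ) • (pgrad v + (pgrad v)ᵀ)

/-- The matrix `x^⊥ (x^⊥)ᵀ q` with `(i,j)`-entry `(x^⊥)ᵢ (x^⊥)ⱼ q`. -/
noncomputable def xPerpxPerpT (q : P2) : Matrix (Fin 2) (Fin 2) P2 :=
  Matrix.of fun i j => xPerp i * xPerp j * q

/-- `rot rot τ := ∂₁(rot τ)₂ − ∂₂(rot τ)₁`. -/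
noncomputable def protRot (τ : Matrix (Fin 2) (Fin 2) P2) : P2 :=
  pderiv (0 : Fin 2) (prot τ 1) - pderiv (1 : Fin 2) (prot τ 0)

/-- Antiderivative of a polynomial in the variable `i`. -/
noncomputable def pint (i : Fin 2) (p : P2) : P2 :=
  ∑ s ∈ p.support, monomial (s + Finsupp.single i 1) (coeff s p / (s i + 1))

lemma pderiv_pint (i : Fin 2) (p : P2) : pderiv i (pint i p) = p := by
  unfold pint
  rw [map_sum]
  conv_rhs => rw [p.as_sum]
  refine Finset.sum_congr rfl fun s _ => ?_
  rw [pderiv_monomial]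
  have h1 : (s + Finsupp.single i 1) - Finsupp.single i 1 = s := by
    ext j; simp
  have h2 : ((s + Finsupp.single i 1 : Fin 2 →₀ ℕ) i) = s i + 1 := by simp
  rw [h1, h2]
  congr 1
  push_cast
  have : ((s i : ℝ) + 1) ≠ 0 := by positivity
  field_simp

lemma totalDegree_pint (i : Fin 2) (p : P2) :
    (pint i p).totalDegree ≤ p.totalDegree + 1 := by
  unfold pint
  refine (totalDegree_finset_sum _ _).trans ?_
  refine Finset.sup_le fun s hs => ?_
  refine (totalDegree_monomial_le _ _).trans ?_
  have hdeg : s.sum (fun _ e => e) ≤ p.totalDegree :=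
    le_totalDegree hs
  have h2 : (s + Finsupp.single i 1).sum (fun _ => id)
      = s.sum (fun _ e => e) + 1 := by
    rw [Finsupp.sum_add_index (by simp) (by simp)]
    simp [Finsupp.sum, Finsupp.support_single_ne_zero _ one_ne_zero]
  omega

/-- `rot` maps symmetric polynomial matrices of degree ≤ k−1 onto polynomial
vector fields of degree ≤ k−2. -/
theorem stmt_13 (k : ℕ) (hk : 2 ≤ k) (w : Fin 2 → P2)
    (hdeg : ∀ i, (w i).totalDegree ≤ k - 2) :
    ∃ τ : Matrix (Fin 2) (Fin 2) P2,
      τᵀ = τ ∧ (∀ i j, (τ i j).totalDegree ≤ k - 1) ∧ prot τ = w := by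
  refine ⟨Matrix.of ![![-(pint 1 (w 0)), 0], ![0, pint 0 (w 1)]], ?_, ?_, ?_⟩
  · ext i j
    fin_cases i <;> fin_cases j <;> simp [Matrix.transpose]
  · intro i j
    have h0 : (pint 1 (w 0)).totalDegree ≤ k - 1 := by
      have := totalDegree_pint 1 (w 0); have := hdeg 0; omega
    have h1 : (pint 0 (w 1)).totalDegree ≤ k - 1 := by
      have := totalDegree_pint 0 (w 1); have := hdeg 1; omega
    fin_cases i <;> fin_cases j <;> simp [h0, h1]
  · funext i
    fin_cases i <;>
      simp [prot, pderiv_pint]
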